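/- arXiv:0906.0627 — 3 statements merged into one kernel-verified Lean document; each statement's English description precedes it below -/
import Mathlib

section
/- Let u be upper semicontinuous on an open set Ω ⊆ ℝⁿ and suppose u enjoys comparison with cones from above in Ω. Then for each x ∈ Ω the function r ↦ (max_{|y - x| = r} u(y) - u(x))/r is nondecreasing on the interval of r > 0 with closed ball B̄_r(x) ⊆ Ω. -/
open Metric

/-- `u` enjoys comparison with cones from above in `Ω`: for every bounded open `V` with
`V̄ ⊆ Ω`, every vertex `z` and constants `a, b`, if `u ≤ a + b|· - z|` on `∂(V \ {z})`,
then the same holds on `V`. -/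
def CompConesAbove {n : ℕ} (Ω : Set (EuclideanSpace ℝ (Fin n)))
    (u : EuclideanSpace ℝ (Fin n) → ℝ) : Prop :=
  ∀ V : Set (EuclideanSpace ℝ (Fin n)), IsOpen V → Bornology.IsBounded V → closure V ⊆ Ω →
    ∀ z : EuclideanSpace ℝ (Fin n), ∀ a b : ℝ,
      (∀ y ∈ frontier (V \ {z}), u y ≤ a + b * ‖y - z‖) →
      ∀ y ∈ V, u y ≤ a + b * ‖y - z‖

/-- An upper semicontinuous function on a compact set has image bounded above. -/
lemma usc_bddAbove {X : Type*} [TopologicalSpace X] {K : Set X} (hK : IsCompact K)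
    {u : X → ℝ} (hu : UpperSemicontinuousOn u K) : BddAbove (u '' K) := by
  have h : ∀ y ∈ K, ∃ U : Set X, IsOpen U ∧ y ∈ U ∧ ∀ z ∈ U ∩ K, u z < u y + 1 := by
    intro y hy
    have := hu y hy (u y + 1) (by linarith)
    rw [eventually_nhdsWithin_iff] at this
    rcases eventually_nhds_iff.mp this with ⟨U, hU1, hU2, hU3⟩
    exact ⟨U, hU2, hU3, fun z hz => hU1 z hz.1 hz.2⟩
  choose U hUopen hymem hUlt using h
  obtain ⟨t, hcov⟩ := hK.elim_nhds_subcover' (fun y hy => U y hy)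
    (fun y hy => (hUopen y hy).mem_nhds (hymem y hy))
  obtain ⟨C, hC⟩ := (t.image fun y => u y.1 + 1).exists_le
  refine ⟨C, ?_⟩
  rintro v ⟨z, hz, rfl⟩
  rcases Set.mem_iUnion₂.mp (hcov hz) with ⟨y, hy, hzy⟩
  exact le_trans (hUlt y y.2 z ⟨hzy, hz⟩).le (hC _ (Finset.mem_image_of_mem _ hy))

/-- For `u` upper semicontinuous enjoying comparison with cones from above, the quotient
`r ↦ (max_{∂B_r(x)} u - u(x))/r` is nondecreasing in `r` on `{r > 0 : B̄_r(x) ⊆ Ω}`. -/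
theorem stmt4 {n : ℕ} (hn : 0 < n) (Ω : Set (EuclideanSpace ℝ (Fin n))) (hΩ : IsOpen Ω)
    (u : EuclideanSpace ℝ (Fin n) → ℝ) (husc : UpperSemicontinuousOn u Ω)
    (hcca : CompConesAbove Ω u) (x : EuclideanSpace ℝ (Fin n)) (hx : x ∈ Ω) :
    ∀ r s : ℝ, 0 < r → r ≤ s → closedBall x s ⊆ Ω →
      (sSup (u '' sphere x r) - u x) / r ≤ (sSup (u '' sphere x s) - u x) / s := by
  intro r s hr hrs hball
  rcases eq_or_lt_of_le hrs with rfl | hlt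
  · exact le_refl _
  have hs : (0:ℝ) < s := lt_trans hr hlt
  haveI : Nontrivial (EuclideanSpace ℝ (Fin n)) := by
    apply Module.nontrivial_of_finrank_pos (R := ℝ)
    rw [finrank_euclideanSpace_fin]
    exact hn
  -- bddAbove facts
  have hsubr : sphere x r ⊆ closedBall x s := fun y hy => by
    rw [mem_closedBall, mem_sphere.mp hy]; exact hrs
  have hsubs : sphere x s ⊆ closedBall x s := sphere_subset_closedBall
  have hbddr : BddAbove (u '' sphere x r) :=
    usc_bddAbove (isCompact_sphere x r) (husc.mono (hsubr.trans hball))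
  have hbdds : BddAbove (u '' sphere x s) :=
    usc_bddAbove (isCompact_sphere x s) (husc.mono (hsubs.trans hball))
  have hner : (u '' sphere x r).Nonempty :=
    ((NormedSpace.sphere_nonempty).mpr hr.le).image u
  set b : ℝ := (sSup (u '' sphere x s) - u x) / s with hb
  have hbs : b * s = sSup (u '' sphere x s) - u x := div_mul_cancel₀ _ hs.ne'
  -- comparison with cones on the ball
  have hcomp : ∀ y ∈ ball x s, u y ≤ u x + b * ‖y - x‖ := by
    refine hcca (ball x s) isOpen_ball isBounded_ball ?_ x (u x) b ?_
    · rw [closure_ball x hs.ne']; exact hball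
    · intro y hy
      have hyc : y ∈ closedBall x s := by
        have h1 : y ∈ closure (ball x s) := closure_mono Set.diff_subset hy.1
        rwa [closure_ball x hs.ne'] at h1
      have hnotin : y ∉ ball x s \ {x} := by
        intro h
        have hop : IsOpen (ball x s \ {x}) := isOpen_ball.sdiff isClosed_singleton
        rw [← hop.interior_eq] at h
        exact hy.2 h
      by_cases hyx : y = x
      · subst hyx; simp
      · have hysph : y ∈ sphere x s := by
          rw [mem_sphere]
          rcases eq_or_lt_of_le (mem_closedBall.mp hyc) with h | h
          · exact h
          · exact absurd ⟨mem_ball.mpr h, hyx⟩ hnotin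
        have : ‖y - x‖ = s := by rw [← dist_eq_norm]; exact hysph
        rw [this, hbs]
        have := le_csSup hbdds (Set.mem_image_of_mem u hysph)
        linarith
  -- conclude
  rw [div_le_div_iff₀ hr hs, ← hbs]
  have hMr : sSup (u '' sphere x r) ≤ u x + b * r := by
    apply csSup_le hner
    rintro v ⟨y, hy, rfl⟩
    have hyb : y ∈ ball x s := mem_ball.mpr (by rw [mem_sphere.mp hy]; exact hlt)
    have := hcomp y hyb
    rwa [show ‖y - x‖ = r by rw [← dist_eq_norm]; exact hy] at this
  nlinarith [hMr, mul_le_mul_of_nonneg_right hMr hs.le]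
end

section
/- Let u be upper semicontinuous on open Ω ⊆ ℝⁿ enjoying comparison with cones from above, and define S⁺u(x) = lim_{r→0⁺}(max_{∂B_r(x)} u - u(x))/r. Then S⁺u is upper semicontinuous on Ω, and if u is differentiable at x then S⁺u(x) = |Du(x)|. -/
open Metric

/-- `S⁺u(z) = lim_{r→0⁺} (max_{∂B_r(z)} u - u(z))/r`, realized (by monotonicity of the
difference quotients) as the infimum over admissible radii. -/
noncomputable def Splus {n : ℕ} (Ω : Set (EuclideanSpace ℝ (Fin n)))
    (u : EuclideanSpace ℝ (Fin n) → ℝ) (z : EuclideanSpace ℝ (Fin n)) : ℝ :=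
  sInf {q : ℝ | ∃ s : ℝ, 0 < s ∧ closedBall z s ⊆ Ω ∧ q = (sSup (u '' sphere z s) - u z) / s}

section Aux

open scoped RealInnerProductSpace

variable {n : ℕ}

lemma euclidean_nontrivial (hn : 0 < n) : Nontrivial (EuclideanSpace ℝ (Fin n)) := by
  refine ⟨EuclideanSpace.single ⟨0, hn⟩ (1 : ℝ), 0, ?_⟩
  have h : ‖EuclideanSpace.single (⟨0, hn⟩ : Fin n) (1 : ℝ)‖ = 1 := by
    rw [EuclideanSpace.norm_single]; norm_num
  intro hc
  rw [hc, norm_zero] at h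
  norm_num at h

lemma sphere_ne (hn : 0 < n) (z : EuclideanSpace ℝ (Fin n)) {s : ℝ} (hs : 0 ≤ s) :
    (sphere z s).Nonempty := by
  haveI := euclidean_nontrivial hn
  exact NormedSpace.sphere_nonempty.mpr hs

lemma usc_bddAbove_s6 {Ω : Set (EuclideanSpace ℝ (Fin n))} {u : EuclideanSpace ℝ (Fin n) → ℝ}
    (husc : UpperSemicontinuousOn u Ω) {s : Set (EuclideanSpace ℝ (Fin n))}
    (hs : IsCompact s) (hsΩ : s ⊆ Ω) : ∃ K : ℝ, ∀ y ∈ s, u y ≤ K := by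
  have h1 : ∀ y ∈ s, ∃ O : Set (EuclideanSpace ℝ (Fin n)),
      IsOpen O ∧ y ∈ O ∧ ∀ z ∈ O, z ∈ Ω → u z < u y + 1 := by
    intro y hy
    have h := husc y (hsΩ hy) (u y + 1) (lt_add_one _)
    rw [eventually_nhdsWithin_iff, _root_.eventually_nhds_iff] at h
    obtain ⟨O, hO1, hO2, hO3⟩ := h
    exact ⟨O, hO2, hO3, hO1⟩
  choose O hOopen hOmem hOlt using h1
  obtain ⟨t, ht⟩ := hs.elim_nhds_subcover' (fun y hy => O y hy)
    (fun y hy => (hOopen y hy).mem_nhds (hOmem y hy))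
  rcases s.eq_empty_or_nonempty with rfl | ⟨x0, hx0⟩
  · exact ⟨0, by simp⟩
  have htne : (t.image fun y => u y.1 + 1).Nonempty := by
    rcases Set.mem_iUnion₂.1 (ht hx0) with ⟨i, hi, _⟩
    exact ⟨u i.1 + 1, Finset.mem_image_of_mem _ hi⟩
  refine ⟨(t.image fun y => u y.1 + 1).max' htne, fun y hy => ?_⟩
  rcases Set.mem_iUnion₂.1 (ht hy) with ⟨i, hi, hyO⟩
  exact le_trans (le_of_lt (hOlt i i.2 y hyO (hsΩ hy)))
    (Finset.le_max' _ _ (Finset.mem_image_of_mem (fun y => u y.1 + 1) hi))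

lemma cone_bound {Ω : Set (EuclideanSpace ℝ (Fin n))} {u : EuclideanSpace ℝ (Fin n) → ℝ}
    (hcca : CompConesAbove Ω u) (z : EuclideanSpace ℝ (Fin n)) {r : ℝ} (hr : 0 < r)
    (hΩr : closedBall z r ⊆ Ω) (hbdd : BddAbove (u '' sphere z r)) :
    ∀ w ∈ ball z r, u w ≤ u z + (sSup (u '' sphere z r) - u z) / r * ‖w - z‖ := by
  have h := hcca (ball z r) isOpen_ball isBounded_ball
    (closure_ball_subset_closedBall.trans hΩr) z (u z)
    ((sSup (u '' sphere z r) - u z) / r) ?_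
  · exact h
  intro y hy
  have hopen : IsOpen (ball z r \ {z}) := isOpen_ball.sdiff isClosed_singleton
  rw [hopen.frontier_eq] at hy
  have hy1 : y ∈ closedBall z r :=
    ((closure_mono Set.diff_subset).trans closure_ball_subset_closedBall) hy.1
  have hy2 : y ∉ ball z r \ {z} := hy.2
  rcases eq_or_ne y z with rfl | hyz
  · simp
  · have hyb : y ∉ ball z r := fun h' => hy2 ⟨h', hyz⟩
    have hys : dist y z = r :=
      le_antisymm (mem_closedBall.mp hy1) (not_lt.mp (fun h' => hyb (mem_ball.mpr h')))
    have h1 : u y ≤ sSup (u '' sphere z r) :=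
      le_csSup hbdd ⟨y, mem_sphere.mpr hys, rfl⟩
    have h2 : ‖y - z‖ = r := by rw [← dist_eq_norm]; exact hys
    rw [h2, div_mul_cancel₀ _ hr.ne']
    linarith

lemma cone_bound_mul {Ω : Set (EuclideanSpace ℝ (Fin n))} {u : EuclideanSpace ℝ (Fin n) → ℝ}
    (hcca : CompConesAbove Ω u) (z : EuclideanSpace ℝ (Fin n)) {r : ℝ} (hr : 0 < r)
    (hΩr : closedBall z r ⊆ Ω) (hbdd : BddAbove (u '' sphere z r)) :
    ∀ w ∈ ball z r, r * u w ≤ r * u z + (sSup (u '' sphere z r) - u z) * ‖w - z‖ := by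
  intro w hw
  have h := cone_bound hcca z hr hΩr hbdd w hw
  have h2 := mul_le_mul_of_nonneg_left h hr.le
  rw [mul_add] at h2
  have e : r * ((sSup (u '' sphere z r) - u z) / r * ‖w - z‖)
      = (sSup (u '' sphere z r) - u z) * ‖w - z‖ := by
    field_simp
  rw [e] at h2
  exact h2

lemma quot_mono (hn : 0 < n) {Ω : Set (EuclideanSpace ℝ (Fin n))}
    {u : EuclideanSpace ℝ (Fin n) → ℝ} (husc : UpperSemicontinuousOn u Ω)
    (hcca : CompConesAbove Ω u) (z : EuclideanSpace ℝ (Fin n)) {s r : ℝ}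
    (hs : 0 < s) (hsr : s ≤ r) (hΩr : closedBall z r ⊆ Ω) :
    (sSup (u '' sphere z s) - u z) / s ≤ (sSup (u '' sphere z r) - u z) / r := by
  rcases eq_or_lt_of_le hsr with rfl | hlt
  · exact le_refl _
  have hr : 0 < r := hs.trans hlt
  obtain ⟨K, hK⟩ := usc_bddAbove_s6 husc (isCompact_sphere z r) (sphere_subset_closedBall.trans hΩr)
  have hbdd : BddAbove (u '' sphere z r) := ⟨K, by rintro _ ⟨w, hw, rfl⟩; exact hK w hw⟩
  have hcone := cone_bound hcca z hr hΩr hbdd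
  have hMs : sSup (u '' sphere z s) ≤ u z + (sSup (u '' sphere z r) - u z) / r * s := by
    apply csSup_le ((sphere_ne hn z hs.le).image _)
    rintro _ ⟨w, hw, rfl⟩
    have hd : dist w z = s := mem_sphere.mp hw
    have h1 := hcone w (mem_ball.mpr (by rw [hd]; exact hlt))
    rwa [← dist_eq_norm, hd] at h1
  rw [div_le_iff₀ hs]
  linarith [hMs]

lemma lip_below (hn : 0 < n) {Ω : Set (EuclideanSpace ℝ (Fin n))} (hΩ : IsOpen Ω)
    {u : EuclideanSpace ℝ (Fin n) → ℝ} (husc : UpperSemicontinuousOn u Ω)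
    (hcca : CompConesAbove Ω u) {z : EuclideanSpace ℝ (Fin n)} (hz : z ∈ Ω) :
    ∃ r C : ℝ, 0 < r ∧ 0 ≤ C ∧ closedBall z r ⊆ Ω ∧
      ∀ y ∈ closedBall z r, u z - C * ‖y - z‖ ≤ u y := by
  obtain ⟨r0, hr0, hball⟩ := Metric.isOpen_iff.mp hΩ z hz
  set r : ℝ := r0 / 4 with hrdef
  have hr : 0 < r := by positivity
  have h2r : closedBall z (2 * r) ⊆ Ω := fun p hp =>
    hball (mem_ball.mpr (lt_of_le_of_lt (mem_closedBall.mp hp) (by rw [hrdef]; linarith)))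
  obtain ⟨K, hK⟩ := usc_bddAbove_s6 husc (isCompact_closedBall z (2 * r)) h2r
  have hKz : u z ≤ K := hK z (mem_closedBall_self (by positivity))
  set m : ℝ := -(2 * (|u z| + |K|)) with hm
  have stepA : ∀ w ∈ closedBall z r,
      (∀ v ∈ ball w r, r * u v ≤ r * u w + (sSup (u '' sphere w r) - u w) * ‖v - w‖) ∧
        sSup (u '' sphere w r) ≤ K := by
    intro w hw
    have hsub : closedBall w r ⊆ closedBall z (2 * r) := fun p hp =>
      mem_closedBall.mpr (by
        have h1 := mem_closedBall.mp hp
        have h2 := mem_closedBall.mp hw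
        have h3 := dist_triangle p w z
        linarith)
    have hbdd : BddAbove (u '' sphere w r) := ⟨K, by
      rintro _ ⟨v, hv, rfl⟩
      exact hK v (hsub (sphere_subset_closedBall hv))⟩
    refine ⟨cone_bound_mul hcca w hr (hsub.trans h2r) hbdd, ?_⟩
    apply csSup_le ((sphere_ne hn w hr.le).image _)
    rintro _ ⟨v, hv, rfl⟩
    exact hK v (hsub (sphere_subset_closedBall hv))
  have stepB : ∀ y ∈ closedBall z (r / 2), m ≤ u y := by
    intro y hy
    have hyr : y ∈ closedBall z r := closedBall_subset_closedBall (by linarith) hy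
    obtain ⟨hcone, hMK⟩ := stepA y hyr
    have hzball : z ∈ ball y r := mem_ball.mpr (by
      rw [dist_comm]
      exact lt_of_le_of_lt (mem_closedBall.mp hy) (by linarith))
    have h1 := hcone z hzball
    set My : ℝ := sSup (u '' sphere y r) with hMy
    set d : ℝ := ‖z - y‖ with hd
    have hd0 : 0 ≤ d := norm_nonneg _
    have hdr : d ≤ r / 2 := by
      rw [hd, ← dist_eq_norm, dist_comm]
      exact mem_closedBall.mp hy
    rcases le_or_gt 0 (u y) with h0 | h0
    · have hpos : (0:ℝ) ≤ |u z| + |K| := by positivity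
      rw [hm]; linarith
    · have e2 : My * d ≤ K * d := mul_le_mul_of_nonneg_right hMK hd0
      have e3 : u y * (r - d) ≤ u y * (r / 2) :=
        mul_le_mul_of_nonpos_left (by linarith) h0.le
      have e4 : r * (-|u z|) ≤ r * u z := mul_le_mul_of_nonneg_left (neg_abs_le (u z)) hr.le
      have e5 : K * d ≤ |K| * d := mul_le_mul_of_nonneg_right (le_abs_self K) hd0
      have e6 : |K| * d ≤ |K| * (r / 2) := mul_le_mul_of_nonneg_left hdr (abs_nonneg K)
      have e7 : r * u z - My * d ≤ u y * (r - d) := by nlinarith [h1]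
      have em : m * (r / 2) = -(|u z| * r) - |K| * r := by rw [hm]; ring
      have e8 : m * (r / 2) ≤ u y * (r / 2) := by
        nlinarith [e2, e3, e4, e5, e6, e7, mul_nonneg (abs_nonneg K) hr.le]
      exact le_of_mul_le_mul_right e8 (by linarith)
  have hmz : m ≤ u z := by
    have h1 := le_abs_self (u z)
    have h2 := neg_abs_le (u z)
    have h3 := abs_nonneg (u z)
    have h4 := abs_nonneg K
    rw [hm]; linarith
  have hKm : (0:ℝ) ≤ K - m := by linarith
  refine ⟨r / 2, 2 * (K - m) / r, by linarith, by positivity,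
    (closedBall_subset_closedBall (by linarith)).trans h2r, ?_⟩
  intro y hy
  obtain ⟨hcone, hMK⟩ := stepA y (closedBall_subset_closedBall (by linarith) hy)
  have hzball : z ∈ ball y r := mem_ball.mpr (by
    rw [dist_comm]
    exact lt_of_le_of_lt (mem_closedBall.mp hy) (by linarith))
  have h1 := hcone z hzball
  have hmy := stepB y hy
  set My : ℝ := sSup (u '' sphere y r) with hMyd
  set d : ℝ := ‖z - y‖ with hd
  have hd0 : 0 ≤ d := norm_nonneg _
  have e2 : (My - u y) * d ≤ (K - m) * d :=
    mul_le_mul_of_nonneg_right (by linarith) hd0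
  have hyz : ‖y - z‖ = d := by rw [hd]; exact norm_sub_rev y z
  rw [hyz]
  have key : (u z - 2 * (K - m) / r * d) * r ≤ u y * r := by
    have expand : (u z - 2 * (K - m) / r * d) * r = u z * r - 2 * ((K - m) * d) := by
      field_simp
    rw [expand]
    nlinarith [h1, e2, mul_nonneg hKm hd0]
  exact le_of_mul_le_mul_right key hr

lemma splus_nonempty {Ω : Set (EuclideanSpace ℝ (Fin n))} (hΩ : IsOpen Ω)
    (u : EuclideanSpace ℝ (Fin n) → ℝ) {z : EuclideanSpace ℝ (Fin n)} (hz : z ∈ Ω) :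
    Set.Nonempty {q : ℝ | ∃ s : ℝ, 0 < s ∧ closedBall z s ⊆ Ω ∧
      q = (sSup (u '' sphere z s) - u z) / s} := by
  obtain ⟨ε, hε, hball⟩ := Metric.isOpen_iff.mp hΩ z hz
  exact ⟨_, ε / 2, by positivity, (closedBall_subset_ball (by linarith)).trans hball, rfl⟩

lemma splus_bddBelow (hn : 0 < n) {Ω : Set (EuclideanSpace ℝ (Fin n))} (hΩ : IsOpen Ω)
    {u : EuclideanSpace ℝ (Fin n) → ℝ} (husc : UpperSemicontinuousOn u Ω)
    (hcca : CompConesAbove Ω u) {z : EuclideanSpace ℝ (Fin n)} (hz : z ∈ Ω) :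
    BddBelow {q : ℝ | ∃ s : ℝ, 0 < s ∧ closedBall z s ⊆ Ω ∧
      q = (sSup (u '' sphere z s) - u z) / s} := by
  obtain ⟨r, C, hr, hC, hΩr, hlip⟩ := lip_below hn hΩ husc hcca hz
  refine ⟨-C, ?_⟩
  rintro q ⟨s, hs, hΩs, rfl⟩
  set s' : ℝ := min s r with hs'def
  have hs' : 0 < s' := lt_min hs hr
  have h1 : (sSup (u '' sphere z s') - u z) / s' ≤ (sSup (u '' sphere z s) - u z) / s :=
    quot_mono hn husc hcca z hs' (min_le_left _ _) hΩs
  obtain ⟨w, hw⟩ := sphere_ne hn z hs'.le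
  have hwd : dist w z = s' := mem_sphere.mp hw
  have hwball : w ∈ closedBall z r := mem_closedBall.mpr (by rw [hwd]; exact min_le_right _ _)
  have hlw := hlip w hwball
  have hnorm : ‖w - z‖ = s' := by rw [← dist_eq_norm]; exact hwd
  rw [hnorm] at hlw
  have hbdd : BddAbove (u '' sphere z s') := by
    obtain ⟨K, hK⟩ := usc_bddAbove_s6 husc (isCompact_sphere z s')
      ((sphere_subset_closedBall.trans (closedBall_subset_closedBall (min_le_left _ _))).trans hΩs)
    exact ⟨K, by rintro _ ⟨v, hv, rfl⟩; exact hK v hv⟩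
  have hM : u w ≤ sSup (u '' sphere z s') := le_csSup hbdd ⟨w, hw, rfl⟩
  have h2 : -C ≤ (sSup (u '' sphere z s') - u z) / s' := by
    rw [le_div_iff₀ hs']
    nlinarith [hlw, hM]
  linarith

lemma splus_grad (hn : 0 < n) {Ω : Set (EuclideanSpace ℝ (Fin n))} (hΩ : IsOpen Ω)
    {u : EuclideanSpace ℝ (Fin n) → ℝ} (husc : UpperSemicontinuousOn u Ω)
    (hcca : CompConesAbove Ω u) {x : EuclideanSpace ℝ (Fin n)} (hx : x ∈ Ω)
    (hd : DifferentiableAt ℝ u x) : Splus Ω u x = ‖gradient u x‖ := by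
  haveI := euclidean_nontrivial hn
  set g : EuclideanSpace ℝ (Fin n) := gradient u x with hg
  set L : ℝ := ‖g‖ with hL
  obtain ⟨v, hv1, hv2⟩ : ∃ v : EuclideanSpace ℝ (Fin n), ‖v‖ = 1 ∧ ⟪g, v⟫ = L := by
    rcases eq_or_ne g 0 with hg0 | hg0
    · refine ⟨EuclideanSpace.single ⟨0, hn⟩ (1 : ℝ), ?_, ?_⟩
      · rw [EuclideanSpace.norm_single]; norm_num
      · rw [hg0, hL, hg0]; simp
    · refine ⟨‖g‖⁻¹ • g, ?_, ?_⟩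
      · rw [norm_smul, norm_inv, norm_norm, inv_mul_cancel₀ (norm_ne_zero_iff.mpr hg0)]
      · rw [real_inner_smul_right, real_inner_self_eq_norm_mul_norm, hL]
        field_simp
  obtain ⟨s₀, hs₀, hΩs₀⟩ : ∃ s₀ : ℝ, 0 < s₀ ∧ closedBall x s₀ ⊆ Ω := by
    obtain ⟨ε, hε, hball⟩ := Metric.isOpen_iff.mp hΩ x hx
    exact ⟨ε / 2, by positivity, (closedBall_subset_ball (by linarith)).trans hball⟩
  have hadm : ∀ s : ℝ, 0 < s → s ≤ s₀ → closedBall x s ⊆ Ω := fun s _ h =>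
    (closedBall_subset_closedBall h).trans hΩs₀
  have hfd : HasFDerivAt u (InnerProductSpace.toDual ℝ (EuclideanSpace ℝ (Fin n)) g) x :=
    hd.hasGradientAt.hasFDerivAt
  have hlo := hfd.isLittleO
  have key : ∀ ε : ℝ, 0 < ε → ∃ δ : ℝ, 0 < δ ∧ ∀ s : ℝ, 0 < s → s < δ → s ≤ s₀ →
      L - ε ≤ (sSup (u '' sphere x s) - u x) / s ∧
        (sSup (u '' sphere x s) - u x) / s ≤ L + ε := by
    intro ε hε
    have h2 := hlo.def hε
    rw [Metric.eventually_nhds_iff] at h2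
    obtain ⟨δ, hδ, hδ2⟩ := h2
    refine ⟨δ, hδ, fun s hs hsδ hss₀ => ?_⟩
    have hbdd : BddAbove (u '' sphere x s) := by
      obtain ⟨K, hK⟩ := usc_bddAbove_s6 husc (isCompact_sphere x s)
        (sphere_subset_closedBall.trans (hadm s hs hss₀))
      exact ⟨K, by rintro _ ⟨w, hw, rfl⟩; exact hK w hw⟩
    have hne : (u '' sphere x s).Nonempty := (sphere_ne hn x hs.le).image _
    have hMup : sSup (u '' sphere x s) ≤ u x + s * (L + ε) := by
      apply csSup_le hne
      rintro _ ⟨w, hw, rfl⟩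
      have hdist : dist w x = s := mem_sphere.mp hw
      have h5 : ‖w - x‖ = s := by rw [← dist_eq_norm]; exact hdist
      have h3 := hδ2 (show dist w x < δ by rw [hdist]; exact hsδ)
      rw [InnerProductSpace.toDual_apply_apply, Real.norm_eq_abs, h5] at h3
      have h6 := (abs_le.mp h3).2
      have h4 : ⟪g, w - x⟫ ≤ L * s := by
        calc ⟪g, w - x⟫ ≤ ‖g‖ * ‖w - x‖ := real_inner_le_norm _ _
          _ = L * s := by rw [h5, hL]
      nlinarith [h6, h4]
    have hwmem : x + s • v ∈ sphere x s := by
      rw [mem_sphere, dist_eq_norm]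
      simp [norm_smul, abs_of_pos hs, hv1]
    have hwd : dist (x + s • v) x = s := mem_sphere.mp hwmem
    have h3 := hδ2 (show dist (x + s • v) x < δ by rw [hwd]; exact hsδ)
    have h5 : ‖x + s • v - x‖ = s := by rw [← dist_eq_norm]; exact hwd
    rw [InnerProductSpace.toDual_apply_apply, Real.norm_eq_abs, h5] at h3
    have hinner : ⟪g, x + s • v - x⟫ = s * L := by
      have e : x + s • v - x = s • v := by abel
      rw [e, real_inner_smul_right, hv2]
    rw [hinner] at h3
    have h6 := (abs_le.mp h3).1
    have hMlow : u x + s * (L - ε) ≤ sSup (u '' sphere x s) := by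
      have h7 : u x + s * (L - ε) ≤ u (x + s • v) := by nlinarith [h6]
      exact h7.trans (le_csSup hbdd ⟨_, hwmem, rfl⟩)
    constructor
    · rw [le_div_iff₀ hs]; nlinarith [hMlow]
    · rw [div_le_iff₀ hs]; nlinarith [hMup]
  have hbddB := splus_bddBelow hn hΩ husc hcca hx
  have hneS := splus_nonempty hΩ u hx
  apply le_antisymm
  · apply le_of_forall_sub_le
    intro ε hε
    obtain ⟨δ, hδ, hkey⟩ := key ε hε
    set s : ℝ := min (δ / 2) s₀ with hsdef
    have hs : 0 < s := lt_min (by linarith) hs₀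
    have h1 : Splus Ω u x ≤ (sSup (u '' sphere x s) - u x) / s :=
      csInf_le hbddB ⟨s, hs, hadm s hs (min_le_right _ _), rfl⟩
    have h2 := (hkey s hs (lt_of_le_of_lt (min_le_left _ _) (by linarith))
      (min_le_right _ _)).2
    linarith
  · apply le_csInf hneS
    rintro q ⟨s, hs, hΩs, rfl⟩
    apply le_of_forall_sub_le
    intro ε hε
    obtain ⟨δ, hδ, hkey⟩ := key ε hε
    set s'' : ℝ := min s (min (δ / 2) s₀) with hs''def
    have hs'' : 0 < s'' := lt_min hs (lt_min (by linarith) hs₀)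
    have hmono := quot_mono hn husc hcca x hs'' (min_le_left _ _) hΩs
    have h1 := (hkey s'' hs''
      (lt_of_le_of_lt ((min_le_right _ _).trans (min_le_left _ _)) (by linarith))
      ((min_le_right _ _).trans (min_le_right _ _))).1
    linarith

set_option maxHeartbeats 1000000 in
lemma splus_usc (hn : 0 < n) {Ω : Set (EuclideanSpace ℝ (Fin n))} (hΩ : IsOpen Ω)
    {u : EuclideanSpace ℝ (Fin n) → ℝ} (husc : UpperSemicontinuousOn u Ω)
    (hcca : CompConesAbove Ω u) : UpperSemicontinuousOn (Splus Ω u) Ω := by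
  intro x hx t ht
  obtain ⟨r', C, hr', hC, hΩr', hlip⟩ := lip_below hn hΩ husc hcca hx
  have hne := splus_nonempty hΩ u hx
  obtain ⟨q₀, hq₀mem, hq₀t⟩ := exists_lt_of_csInf_lt hne ht
  obtain ⟨s, hs, hΩs, rfl⟩ := hq₀mem
  set b : ℝ := (sSup (u '' sphere x s) - u x) / s with hbdef
  have hbt : b < t := hq₀t
  obtain ⟨Kb, hKb⟩ := usc_bddAbove_s6 husc (isCompact_sphere x s)
    (sphere_subset_closedBall.trans hΩs)
  have hbdd : BddAbove (u '' sphere x s) := ⟨Kb, by rintro _ ⟨w, hw, rfl⟩; exact hKb w hw⟩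
  have hcone := cone_bound hcca x hs hΩs hbdd
  set A : ℝ := 2 * |b| + C with hA
  have hA0 : 0 ≤ A := by positivity
  set D : ℝ := (t - b) * s with hD
  have hD0 : 0 < D := mul_pos (by linarith) hs
  set ρ : ℝ := min (min (s / 4) r') (D / (2 * (|A + t| + 1))) with hρdef
  have hρ : 0 < ρ := lt_min (lt_min (by linarith) hr') (by positivity)
  have hρs : ρ < s / 2 :=
    lt_of_le_of_lt ((min_le_left _ _).trans (min_le_left _ _)) (by linarith)
  have hρr' : ρ ≤ r' := (min_le_left _ _).trans (min_le_right _ _)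
  have hρD : ρ * |A + t| ≤ D / 2 := by
    have h1 : ρ ≤ D / (2 * (|A + t| + 1)) := min_le_right _ _
    have h2 : (0:ℝ) ≤ |A + t| := abs_nonneg _
    calc ρ * |A + t| ≤ D / (2 * (|A + t| + 1)) * |A + t| :=
          mul_le_mul_of_nonneg_right h1 h2
      _ ≤ D / 2 := by
          rw [div_mul_eq_mul_div, div_le_div_iff₀ (by positivity) (by norm_num)]
          nlinarith [hD0.le, h2]
  have hsρ : 0 < s - ρ := by linarith
  have hF : (b * s + A * ρ) / (s - ρ) < t := by
    rw [div_lt_iff₀ hsρ]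
    nlinarith [hρD, hD0, mul_le_mul_of_nonneg_left (le_abs_self (A + t)) hρ.le]
  have hmem : ∀ y, y ∈ ball x ρ → y ∈ Ω → Splus Ω u y < t := by
    intro y hyρ hyΩ
    have hy' : dist y x < ρ := mem_ball.mp hyρ
    have hadm : closedBall y (s - ρ) ⊆ Ω := fun p hp => hΩs (mem_closedBall.mpr (by
      have h1 := mem_closedBall.mp hp
      have h2 := dist_triangle p y x
      linarith [hy'.le]))
    have h1 : Splus Ω u y ≤ (sSup (u '' sphere y (s - ρ)) - u y) / (s - ρ) :=
      csInf_le (splus_bddBelow hn hΩ husc hcca hyΩ) ⟨s - ρ, hsρ, hadm, rfl⟩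
    have hMb : sSup (u '' sphere y (s - ρ)) ≤ u x + b * s + 2 * |b| * ρ := by
      apply csSup_le ((sphere_ne hn y hsρ.le).image _)
      rintro _ ⟨w, hw, rfl⟩
      have hwy : dist w y = s - ρ := mem_sphere.mp hw
      have hwx : dist w x < s := by
        have h2 := dist_triangle w y x
        linarith
      have hwx2 : s - 2 * ρ ≤ dist w x := by
        have h2 := dist_triangle w x y
        have h3 : dist x y = dist y x := dist_comm x y
        linarith [hy'.le]
      have hco := hcone w (mem_ball.mpr hwx)
      have hnx : ‖w - x‖ = dist w x := (dist_eq_norm _ _).symm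
      rw [hnx] at hco
      rcases le_or_gt 0 b with hb0 | hb0
      · have h4 : b * dist w x ≤ b * s := mul_le_mul_of_nonneg_left hwx.le hb0
        have h5 : |b| = b := abs_of_nonneg hb0
        nlinarith [hco, h4, mul_nonneg (mul_nonneg (by norm_num : (0:ℝ) ≤ 2) (abs_nonneg b)) hρ.le]
      · have h4 : b * dist w x ≤ b * (s - 2 * ρ) := mul_le_mul_of_nonpos_left hwx2 hb0.le
        have h5 : |b| = -b := abs_of_neg hb0
        nlinarith [hco, h4]
    have hulow : u x - C * ρ ≤ u y := by
      have h2 := hlip y (mem_closedBall.mpr (le_trans hy'.le hρr'))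
      have h3 : ‖y - x‖ ≤ ρ := by rw [← dist_eq_norm]; exact hy'.le
      linarith [h2, mul_le_mul_of_nonneg_left h3 hC]
    have h3 : (sSup (u '' sphere y (s - ρ)) - u y) / (s - ρ) ≤ (b * s + A * ρ) / (s - ρ) := by
      rw [div_le_div_iff_of_pos_right hsρ]
      rw [hA]
      linarith [hMb, hulow]
    linarith [h1, h3, hF]
  filter_upwards [nhdsWithin_le_nhds (ball_mem_nhds x hρ), self_mem_nhdsWithin] with y hy1 hy2
  exact hmem y hy1 hy2

end Aux

/-- `S⁺u` is upper semicontinuous on `Ω`, and equals `|Du(x)|` at points of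
differentiability. -/
theorem stmt6 {n : ℕ} (hn : 0 < n) (Ω : Set (EuclideanSpace ℝ (Fin n))) (hΩ : IsOpen Ω)
    (u : EuclideanSpace ℝ (Fin n) → ℝ) (husc : UpperSemicontinuousOn u Ω)
    (hcca : CompConesAbove Ω u) :
    UpperSemicontinuousOn (Splus Ω u) Ω ∧
      ∀ x ∈ Ω, DifferentiableAt ℝ u x → Splus Ω u x = ‖gradient u x‖ :=
  ⟨splus_usc hn hΩ husc hcca, fun _ hx hd => splus_grad hn hΩ husc hcca hx hd⟩
end

section
/- Let u ∈ C(Ω) enjoy comparison with cones both from above and from below on an open set Ω ⊆ ℝⁿ. Then u is locally Lipschitz continuous in Ω: for every compact K ⊆ Ω there is C such that |u(x) - u(y)| ≤ C|x - y| for all x, y ∈ K sufficiently close. -/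
open Metric

/-- Comparison with cones from below in `Ω`. -/
def CompConesBelow {n : ℕ} (Ω : Set (EuclideanSpace ℝ (Fin n)))
    (u : EuclideanSpace ℝ (Fin n) → ℝ) : Prop :=
  ∀ V : Set (EuclideanSpace ℝ (Fin n)), IsOpen V → Bornology.IsBounded V → closure V ⊆ Ω →
    ∀ z : EuclideanSpace ℝ (Fin n), ∀ a b : ℝ,
      (∀ y ∈ frontier (V \ {z}), u y ≥ a - b * ‖y - z‖) →
      ∀ y ∈ V, u y ≥ a - b * ‖y - z‖

/-- A continuous function enjoying comparison with cones from above and below is locally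
Lipschitz in `Ω`. -/
theorem stmt7 {n : ℕ} (Ω : Set (EuclideanSpace ℝ (Fin n))) (hΩ : IsOpen Ω)
    (u : EuclideanSpace ℝ (Fin n) → ℝ) (hu : ContinuousOn u Ω)
    (ha : CompConesAbove Ω u) (hb : CompConesBelow Ω u) :
    ∀ K : Set (EuclideanSpace ℝ (Fin n)), K ⊆ Ω → IsCompact K →
      ∃ C > (0:ℝ), ∃ δ > (0:ℝ), ∀ x ∈ K, ∀ y ∈ K, dist x y < δ →
        |u x - u y| ≤ C * dist x y := by
  intro K hKΩ hK
  rcases K.eq_empty_or_nonempty with rfl | ⟨x₀, hx₀⟩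
  · exact ⟨1, one_pos, 1, one_pos, by simp⟩
  -- choose r > 0 with the r-thickening of K inside Ω
  obtain ⟨r, hr, hrΩ⟩ := hK.exists_cthickening_subset_open hΩ hKΩ
  set K' : Set (EuclideanSpace ℝ (Fin n)) := cthickening r K with hK'def
  have hK'Ω : K' ⊆ Ω := hrΩ
  have hK'cpt : IsCompact K' := hK.cthickening
  -- a bound for |u| on K'
  obtain ⟨M, hM⟩ := hK'cpt.exists_bound_of_continuousOn (hu.mono hK'Ω)
  have hM0 : 0 ≤ M := le_trans (norm_nonneg _) (hM x₀ (self_subset_cthickening K hx₀))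
  set b : ℝ := 2 * M / r with hbdef
  have hb0 : 0 ≤ b := by positivity
  refine ⟨b + 1, by positivity, r, hr, ?_⟩
  intro x hx y hy hxy
  have hballK' : closedBall x r ⊆ K' := closedBall_subset_cthickening hx r
  have hclV : closure (ball x r) ⊆ Ω :=
    (closure_ball_subset_closedBall.trans hballK').trans hK'Ω
  -- key: cone comparison on V = ball x r with vertex x
  have hfr : ∀ w ∈ frontier (ball x r \ {x}), w = x ∨ dist w x = r := by
    intro w hw
    have h1 : w ∈ closedBall x r :=
      closure_ball_subset_closedBall (closure_mono Set.diff_subset hw.1)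
    by_cases hwx : w = x
    · exact Or.inl hwx
    · right
      have h2 : w ∉ ball x r \ {x} := by
        intro hmem
        exact hw.2 ((IsOpen.subset_interior_iff (isOpen_ball.sdiff isClosed_singleton)).2
          le_rfl hmem)
      have h3 : w ∉ ball x r := fun h => h2 ⟨h, hwx⟩
      exact le_antisymm h1 (not_lt.1 fun h => h3 (mem_ball.2 h))
  have hMx : |u x| ≤ M := by
    have := hM x (hballK' (mem_closedBall_self hr.le))
    simpa [Real.norm_eq_abs] using this
  have hcone : ∀ w ∈ frontier (ball x r \ {x}),
      u w ≤ u x + b * ‖w - x‖ ∧ u w ≥ u x - b * ‖w - x‖ := by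
    intro w hw
    rcases hfr w hw with rfl | hwr
    · simp
    · have hwK' : w ∈ K' := hballK' (mem_closedBall.2 hwr.le)
      have hMw : |u w| ≤ M := by simpa [Real.norm_eq_abs] using hM w hwK'
      have hnorm : ‖w - x‖ = r := by rw [← dist_eq_norm]; exact hwr
      have hbr : b * ‖w - x‖ = 2 * M := by
        rw [hnorm, hbdef]; field_simp
      constructor
      · rw [hbr]
        have := abs_le.1 hMw
        have := abs_le.1 hMx
        linarith
      · rw [hbr]
        have := abs_le.1 hMw
        have := abs_le.1 hMx
        linarith
  have hyball : y ∈ ball x r := mem_ball.2 (by rwa [dist_comm])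
  have hup : u y ≤ u x + b * ‖y - x‖ :=
    ha (ball x r) isOpen_ball isBounded_ball hclV x (u x) b
      (fun w hw => (hcone w hw).1) y hyball
  have hdown : u y ≥ u x - b * ‖y - x‖ :=
    hb (ball x r) isOpen_ball isBounded_ball hclV x (u x) b
      (fun w hw => (hcone w hw).2) y hyball
  have hnd : ‖y - x‖ = dist x y := by rw [← dist_eq_norm, dist_comm]
  rw [abs_sub_comm, abs_le]
  constructor
  · nlinarith [dist_nonneg (x := x) (y := y), hnd ▸ hdown]
  · nlinarith [dist_nonneg (x := x) (y := y), hnd ▸ hup]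
end
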